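/- If a cherry reduction is applied to a rooted binary tree-child network, the result is again a rooted binary tree-child network. -/
import Mathlib


/-!  Formalisation preliminaries for rooted and unrooted binary phylogenetic
networks, cherry reductions, cherry-reduction sequences and cherry-picking
sequences, following Döcker & Linz. -/

/-- A finite directed graph whose vertices are natural numbers. -/
structure DNet where
  verts : Finset ℕ
  arcs : Finset (ℕ × ℕ)

namespace DNet

/-- in-degree of a vertex -/
def inDeg (N : DNet) (v : ℕ) : ℕ := (N.arcs.filter (fun p => p.2 = v)).card

/-- out-degree of a vertex -/
def outDeg (N : DNet) (v : ℕ) : ℕ := (N.arcs.filter (fun p => p.1 = v)).card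

/-- the arc relation -/
def Arc (N : DNet) (u v : ℕ) : Prop := (u, v) ∈ N.arcs

/-- the digraph has no directed cycle -/
def Acyclic (N : DNet) : Prop := ∀ v, ¬ Relation.TransGen N.Arc v v

/-- root: in-degree 0 and out-degree 2 -/
def IsRoot (N : DNet) (v : ℕ) : Prop := v ∈ N.verts ∧ N.inDeg v = 0 ∧ N.outDeg v = 2

/-- leaf: in-degree 1 and out-degree 0 -/
def IsLeaf (N : DNet) (v : ℕ) : Prop := v ∈ N.verts ∧ N.inDeg v = 1 ∧ N.outDeg v = 0

/-- tree vertex: in-degree 1 and out-degree 2 -/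
def IsTreeVertex (N : DNet) (v : ℕ) : Prop := v ∈ N.verts ∧ N.inDeg v = 1 ∧ N.outDeg v = 2

/-- reticulation: in-degree 2 and out-degree 1 -/
def IsRet (N : DNet) (v : ℕ) : Prop := v ∈ N.verts ∧ N.inDeg v = 2 ∧ N.outDeg v = 1

/-- the network consists of a single vertex -/
def SingleVertex (N : DNet) : Prop := N.verts.card = 1 ∧ N.arcs = ∅

/-- the reticulation number of a rooted network: number of in-degree-2 vertices -/
def retNum (N : DNet) : ℕ := (N.verts.filter (fun v => N.inDeg v = 2)).card

/-- tree-child: every vertex with a child has a child that is a tree vertex or a leaf -/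
def TreeChild (N : DNet) : Prop :=
  ∀ v ∈ N.verts, N.outDeg v ≠ 0 → ∃ c, (v, c) ∈ N.arcs ∧ (N.IsTreeVertex c ∨ N.IsLeaf c)

/-- a stack: two reticulations joined by an arc -/
def HasStack (N : DNet) : Prop := ∃ u v, N.IsRet u ∧ N.IsRet v ∧ (u, v) ∈ N.arcs

/-- a pair of sibling reticulations: two reticulations with a common parent -/
def HasSiblingRets (N : DNet) : Prop :=
  ∃ p u v, u ≠ v ∧ N.IsRet u ∧ N.IsRet v ∧ (p, u) ∈ N.arcs ∧ (p, v) ∈ N.arcs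

/-- stack-free -/
def StackFree (N : DNet) : Prop := ¬ N.HasStack

end DNet

/-- `N` is a rooted binary phylogenetic network with leaf set `X`
(including the degenerate single-vertex network when `|X| = 1`). -/
def IsRootedBinaryNet (N : DNet) (X : Finset ℕ) : Prop :=
  (∃ x, X = {x} ∧ N.verts = {x} ∧ N.arcs = ∅) ∨
  ((∀ p ∈ N.arcs, p.1 ∈ N.verts ∧ p.2 ∈ N.verts) ∧
   (∀ p ∈ N.arcs, p.1 ≠ p.2) ∧
   N.Acyclic ∧
   (∃! ρ, ρ ∈ N.verts ∧ N.inDeg ρ = 0) ∧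
   (∀ v ∈ N.verts, N.IsRoot v ∨ N.IsLeaf v ∨ N.IsTreeVertex v ∨ N.IsRet v) ∧
   (∀ v, N.IsLeaf v ↔ v ∈ X))

/-- `[a,b]` is a cherry of the rooted network `N` (with `a` the leaf to be deleted). -/
def RCherry (N : DNet) (a b : ℕ) : Prop :=
  a ≠ b ∧ N.IsLeaf a ∧ N.IsLeaf b ∧ ∃ p, (p, a) ∈ N.arcs ∧ (p, b) ∈ N.arcs

/-- `(a,b)` is a reticulated cherry of the rooted network `N` with reticulation leaf `a`:
the parent of `a` is a reticulation and receives an arc from the parent of `b`. -/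
def RRetCherry (N : DNet) (a b : ℕ) : Prop :=
  a ≠ b ∧ N.IsLeaf a ∧ N.IsLeaf b ∧
  ∃ pa pb, (pa, a) ∈ N.arcs ∧ (pb, b) ∈ N.arcs ∧ N.IsRet pa ∧ (pb, pa) ∈ N.arcs

/-- `M` is obtained from the rooted network `N` by reducing the cherry `[a,b]`:
delete `a` and suppress (or, if it is the root, delete) the resulting degree-2 vertex. -/
def RReduceCherry (N M : DNet) (a b : ℕ) : Prop :=
  RCherry N a b ∧
  ∃ p, (p, a) ∈ N.arcs ∧ (p, b) ∈ N.arcs ∧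
    ((N.inDeg p = 0 ∧ M.verts = N.verts \ {a, p} ∧ M.arcs = N.arcs \ {(p, a), (p, b)}) ∨
     (∃ g, (g, p) ∈ N.arcs ∧ M.verts = N.verts \ {a, p} ∧
        M.arcs = insert (g, b) (N.arcs \ {(g, p), (p, a), (p, b)})))

/-- `M` is obtained from the rooted network `N` by reducing the reticulated cherry `(a,b)`
with reticulation leaf `a`: delete the reticulation arc `(p_b, p_a)` and suppress the two
resulting degree-2 vertices. -/
def RReduceRetCherry (N M : DNet) (a b : ℕ) : Prop :=
  RRetCherry N a b ∧
  ∃ pa pb qa qb, (pa, a) ∈ N.arcs ∧ (pb, b) ∈ N.arcs ∧ N.IsRet pa ∧ (pb, pa) ∈ N.arcs ∧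
    (qa, pa) ∈ N.arcs ∧ qa ≠ pb ∧ (qb, pb) ∈ N.arcs ∧
    M.verts = N.verts \ {pa, pb} ∧
    M.arcs = insert (qa, a) (insert (qb, b)
      (N.arcs \ {(pb, pa), (pa, a), (qa, pa), (pb, b), (qb, pb)}))

/-- A recorded reduction: either a cherry pair `[x,y]` or a reticulated-cherry pair `(x,y)`
(the deleted leaf, resp. the reticulation leaf, is listed first). -/
inductive Pick where
  | cherry (x y : ℕ)
  | ret (x y : ℕ)
deriving DecidableEq

namespace Pick

/-- first coordinate -/
def fst : Pick → ℕ
  | cherry x _ => x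
  | ret x _ => x

/-- second coordinate -/
def snd : Pick → ℕ
  | cherry _ y => y
  | ret _ y => y

/-- the pair contains the element `z` -/
def Contains (r : Pick) (z : ℕ) : Prop := r.fst = z ∨ r.snd = z

/-- the pair is a reticulated-cherry pair -/
def IsRetPair : Pick → Prop
  | cherry _ _ => False
  | ret _ _ => True

/-- the pair is a cherry pair -/
def IsCherryPair : Pick → Prop
  | cherry _ _ => True
  | ret _ _ => False

end Pick

/-- The step from `N` to `M` is the cherry reduction recorded by the pick `r`
(rooted version). -/
def RStep (N M : DNet) : Pick → Prop
  | .cherry x y => RReduceCherry N M x y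
  | .ret x y => RReduceRetCherry N M x y

/-- `(Ns 0, …, Ns k)` is a cherry-reduction sequence of rooted networks whose associated
cherry-picking sequence is `(rs 0, …, rs (k-1))`. -/
def RCherrySeq (Ns : ℕ → DNet) (rs : ℕ → Pick) (k : ℕ) : Prop :=
  ∀ i < k, RStep (Ns i) (Ns (i + 1)) (rs i)

/-- `(Ns 0, …, Ns k)` is a cherry-reduction sequence of rooted networks. -/
def RReductionSeq (Ns : ℕ → DNet) (k : ℕ) : Prop :=
  ∀ i < k, ∃ r, RStep (Ns i) (Ns (i + 1)) r

/-- `R` is a rooted orchard network: it admits a complete cherry-reduction sequence. -/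
def Orchard (R : DNet) : Prop :=
  ∃ Ns k, Ns 0 = R ∧ RReductionSeq Ns k ∧ (Ns k).SingleVertex

/-- `j = s(i)`: the smallest index `j > i` (within the sequence of length `k`) such that
`rs j` contains the first coordinate of `rs i`. -/
def SuccAt (rs : ℕ → Pick) (k i j : ℕ) : Prop :=
  i < j ∧ j < k ∧ (rs j).Contains (rs i).fst ∧
  ∀ l, i < l → l < j → ¬ (rs l).Contains (rs i).fst

/-- Property (P1): the successor pair of every reticulated-cherry pair, if it exists,
is a cherry pair. -/
def SeqP1 (rs : ℕ → Pick) (k : ℕ) : Prop :=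
  ∀ i j, (rs i).IsRetPair → SuccAt rs k i j → (rs j).IsCherryPair

/-- Property (P2): no element of the sequence is the successor pair of two distinct
reticulated-cherry pairs. -/
def SeqP2 (rs : ℕ → Pick) (k : ℕ) : Prop :=
  ∀ i i' j, i ≠ i' → (rs i).IsRetPair → (rs i').IsRetPair →
    SuccAt rs k i j → SuccAt rs k i' j → False

/-- A tree-child cherry-picking sequence: one satisfying (P1) and (P2). -/
def TreeChildSeq (rs : ℕ → Pick) (k : ℕ) : Prop := SeqP1 rs k ∧ SeqP2 rs k

/-- Property (P3): the first coordinate of each pair does not occur as the second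
coordinate of any later pair. -/
def SeqP3 (rs : ℕ → Pick) (k : ℕ) : Prop :=
  ∀ i j, i < j → j < k → (rs i).fst ≠ (rs j).snd

/-- A finite undirected graph whose vertices are natural numbers. -/
structure UNet where
  verts : Finset ℕ
  edges : Finset (Sym2 ℕ)

namespace UNet

/-- degree of a vertex -/
def deg (U : UNet) (v : ℕ) : ℕ := (U.edges.filter (fun e => v ∈ e)).card

/-- adjacency -/
def Adj (U : UNet) (u v : ℕ) : Prop := u ≠ v ∧ s(u, v) ∈ U.edges

/-- connectedness -/
def Connected (U : UNet) : Prop :=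
  ∀ u ∈ U.verts, ∀ v ∈ U.verts, Relation.ReflTransGen U.Adj u v

/-- leaf: degree-1 vertex -/
def IsLeaf (U : UNet) (v : ℕ) : Prop := v ∈ U.verts ∧ U.deg v = 1

/-- the network consists of a single vertex -/
def SingleVertex (U : UNet) : Prop := U.verts.card = 1 ∧ U.edges = ∅

/-- the reticulation number of an unrooted network: `|E| - (|V| - 1)` -/
def retNum (U : UNet) : ℕ := U.edges.card - (U.verts.card - 1)

end UNet

/-- `U` is an unrooted binary phylogenetic network with leaf set `X`
(including the degenerate single-vertex network when `|X| = 1`). -/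
def IsUnrootedBinaryNet (U : UNet) (X : Finset ℕ) : Prop :=
  (∃ x, X = {x} ∧ U.verts = {x} ∧ U.edges = ∅) ∨
  ((∀ e ∈ U.edges, ¬ e.IsDiag ∧ ∀ v ∈ e, v ∈ U.verts) ∧
   U.Connected ∧
   (∀ v ∈ U.verts, U.deg v = 1 ∨ U.deg v = 3) ∧
   (∀ v, U.IsLeaf v ↔ v ∈ X))

/-- `[a,b]` is a cherry of the unrooted network `U`. -/
def UCherry (U : UNet) (a b : ℕ) : Prop :=
  a ≠ b ∧ U.IsLeaf a ∧ U.IsLeaf b ∧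
  ((∃ p, s(a, p) ∈ U.edges ∧ s(b, p) ∈ U.edges ∧ p ≠ a ∧ p ≠ b) ∨ U.edges = {s(a, b)})

/-- the edge `{u,v}` lies on a cycle of `U` -/
def UOnCycle (U : UNet) (u v : ℕ) : Prop :=
  s(u, v) ∈ U.edges ∧
  Relation.ReflTransGen (fun x y => x ≠ y ∧ s(x, y) ∈ U.edges ∧ s(x, y) ≠ s(u, v)) u v

/-- `(a,b)` is a reticulated cherry of the unrooted network `U` with reticulation
edge `{u,v}`. -/
def URetCherry (U : UNet) (a b : ℕ) : Prop :=
  a ≠ b ∧ U.IsLeaf a ∧ U.IsLeaf b ∧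
  ∃ u v, s(a, u) ∈ U.edges ∧ s(u, v) ∈ U.edges ∧ s(v, b) ∈ U.edges ∧
    u ≠ v ∧ u ≠ a ∧ v ≠ b ∧ UOnCycle U u v

/-- `W` is obtained from `U` by reducing the cherry `[a,b]`: delete `a` and, if `U` has
at least two edges, suppress the resulting degree-2 vertex. -/
def UReduceCherry (U W : UNet) (a b : ℕ) : Prop :=
  UCherry U a b ∧
  ((U.edges = {s(a, b)} ∧ W.verts = U.verts \ {a} ∧ W.edges = ∅) ∨
   (∃ p g, s(a, p) ∈ U.edges ∧ s(b, p) ∈ U.edges ∧ s(p, g) ∈ U.edges ∧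
      p ≠ a ∧ p ≠ b ∧ g ≠ a ∧ g ≠ b ∧ g ≠ p ∧
      W.verts = U.verts \ {a, p} ∧
      W.edges = insert s(b, g) (U.edges \ {s(a, p), s(b, p), s(p, g)})))

/-- `W` is obtained from `U` by reducing the reticulated cherry `(a,b)`: delete the
reticulation edge `{u,v}` and suppress the two resulting degree-2 vertices. -/
def UReduceRetCherry (U W : UNet) (a b : ℕ) : Prop :=
  URetCherry U a b ∧
  ∃ u v ga gb, s(a, u) ∈ U.edges ∧ s(u, v) ∈ U.edges ∧ s(v, b) ∈ U.edges ∧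
    u ≠ v ∧ u ≠ a ∧ v ≠ b ∧ UOnCycle U u v ∧
    s(u, ga) ∈ U.edges ∧ ga ≠ a ∧ ga ≠ v ∧ ga ≠ u ∧
    s(v, gb) ∈ U.edges ∧ gb ≠ b ∧ gb ≠ u ∧ gb ≠ v ∧
    W.verts = U.verts \ {u, v} ∧
    W.edges = insert s(a, ga) (insert s(b, gb)
      (U.edges \ {s(u, v), s(a, u), s(u, ga), s(v, b), s(v, gb)}))

/-- The step from `U` to `W` is the cherry reduction recorded by the pick `r`
(unrooted version). -/
def UStep (U W : UNet) : Pick → Prop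
  | .cherry x y => UReduceCherry U W x y
  | .ret x y => UReduceRetCherry U W x y

/-- `(Us 0, …, Us k)` is a cherry-reduction sequence of unrooted networks whose associated
cherry-picking sequence is `(rs 0, …, rs (k-1))`. -/
def UCherrySeq (Us : ℕ → UNet) (rs : ℕ → Pick) (k : ℕ) : Prop :=
  ∀ i < k, UStep (Us i) (Us (i + 1)) (rs i)

/-- `(Us 0, …, Us k)` is a cherry-reduction sequence of unrooted networks. -/
def UReductionSeq (Us : ℕ → UNet) (k : ℕ) : Prop :=
  ∀ i < k, ∃ r, UStep (Us i) (Us (i + 1)) r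

/-- The rooted network `R` is an orientation of the unrooted network `U`: `U` is obtained
from `R` by forgetting arc directions and suppressing the root. -/
def IsOrientationOf (R : DNet) (U : UNet) : Prop :=
  (R.arcs = ∅ ∧ U.edges = ∅ ∧ U.verts = R.verts) ∨
  (∃ ρ c₁ c₂, ρ ∈ R.verts ∧ R.inDeg ρ = 0 ∧ c₁ ≠ c₂ ∧
    (ρ, c₁) ∈ R.arcs ∧ (ρ, c₂) ∈ R.arcs ∧
    U.verts = R.verts.erase ρ ∧
    U.edges = insert s(c₁, c₂)
      ((R.arcs.filter (fun p => p.1 ≠ ρ)).image (fun p => s(p.1, p.2))))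

/-- `U` is an unrooted tree-child network on `X`: it has a tree-child orientation. -/
def UnrootedTreeChild (U : UNet) (X : Finset ℕ) : Prop :=
  ∃ R : DNet, IsRootedBinaryNet R X ∧ R.TreeChild ∧ IsOrientationOf R U

/-- The pick `r` is one of the picks associated with the recorded reduction `p`:
it must agree with `p` on cherry reductions, and may swap the two coordinates of a
reticulated-cherry reduction. -/
def PickAssoc : Pick → Pick → Prop
  | .cherry x y, r => r = .cherry x y
  | .ret x y, r => r = .ret x y ∨ r = .ret y x

/-- `X`-labelled isomorphism of unrooted networks. -/
def UIso (X : Finset ℕ) (U W : UNet) : Prop :=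
  ∃ f : ℕ → ℕ, Set.BijOn f ↑U.verts ↑W.verts ∧ (∀ x ∈ X, f x = x) ∧
    W.edges = U.edges.image (Sym2.map f)

section Helpers

private lemma out_ne_zero {N : DNet} {x y : ℕ} (h : (x, y) ∈ N.arcs) : N.outDeg x ≠ 0 :=
  Finset.card_ne_zero_of_mem (Finset.mem_filter.mpr ⟨h, rfl⟩)

private lemma in_ne_zero {N : DNet} {x y : ℕ} (h : (x, y) ∈ N.arcs) : N.inDeg y ≠ 0 :=
  Finset.card_ne_zero_of_mem (Finset.mem_filter.mpr ⟨h, rfl⟩)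

private lemma in_unique {N : DNet} {x p q : ℕ} (h : N.inDeg x = 1)
    (hp : (p, x) ∈ N.arcs) (hq : (q, x) ∈ N.arcs) : p = q := by
  have h2 := Finset.card_le_one.mp h.le _ (Finset.mem_filter.mpr ⟨hp, rfl⟩)
      _ (Finset.mem_filter.mpr ⟨hq, rfl⟩)
  exact congrArg Prod.fst h2

private lemma out_unique {N : DNet} {x p q : ℕ} (h : N.outDeg x = 1)
    (hp : (x, p) ∈ N.arcs) (hq : (x, q) ∈ N.arcs) : p = q := by
  have h2 := Finset.card_le_one.mp h.le _ (Finset.mem_filter.mpr ⟨hp, rfl⟩)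
      _ (Finset.mem_filter.mpr ⟨hq, rfl⟩)
  exact congrArg Prod.snd h2

private lemma out_two {N : DNet} {x p q : ℕ} (hpq : p ≠ q)
    (hp : (x, p) ∈ N.arcs) (hq : (x, q) ∈ N.arcs) : 2 ≤ N.outDeg x :=
  Finset.one_lt_card.mpr ⟨_, Finset.mem_filter.mpr ⟨hp, rfl⟩, _,
    Finset.mem_filter.mpr ⟨hq, rfl⟩, by simp [hpq]⟩

private lemma in_mem_pair {N : DNet} {x p q r : ℕ} (h : N.inDeg x = 2) (hpq : p ≠ q)
    (hp : (p, x) ∈ N.arcs) (hq : (q, x) ∈ N.arcs) (hr : (r, x) ∈ N.arcs) :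
    r = p ∨ r = q := by
  by_contra hc
  push_neg at hc
  have h3 : 2 < (N.arcs.filter (fun z => z.2 = x)).card :=
    Finset.two_lt_card.mpr ⟨_, Finset.mem_filter.mpr ⟨hp, rfl⟩,
      _, Finset.mem_filter.mpr ⟨hq, rfl⟩, _, Finset.mem_filter.mpr ⟨hr, rfl⟩,
      by simp [Prod.ext_iff, hpq, Ne.symm hc.1, Ne.symm hc.2]⟩
  unfold DNet.inDeg at h
  omega

private lemma filter_congr_mem {A B : Finset (ℕ × ℕ)} {f : ℕ × ℕ → Prop} [DecidablePred f]
    (h : ∀ x, f x → (x ∈ A ↔ x ∈ B)) : A.filter f = B.filter f := by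
  ext x
  simp only [Finset.mem_filter]
  exact ⟨fun ⟨hm, hf⟩ => ⟨(h x hf).1 hm, hf⟩, fun ⟨hm, hf⟩ => ⟨(h x hf).2 hm, hf⟩⟩

end Helpers
/-- A cherry reduction applied to a rooted binary tree-child network yields
a rooted binary tree-child network. -/
theorem treeChild_preserved_by_reduction (R M : DNet) (X : Finset ℕ) (a b : ℕ)
    (hR : IsRootedBinaryNet R X) (htc : R.TreeChild)
    (hred : RReduceCherry R M a b ∨ RReduceRetCherry R M a b) :
    M.TreeChild := by
  rcases hR with ⟨x, _, _, hA⟩ | ⟨hend, hnl, _, _, hclass, _⟩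
  · exfalso
    rcases hred with ⟨⟨_, _, _, p, hpa, _⟩, _⟩ | ⟨⟨_, _, _, pa, pb, hpaa, _⟩, _⟩
    · rw [hA] at hpa; exact absurd hpa (Finset.notMem_empty _)
    · rw [hA] at hpaa; exact absurd hpaa (Finset.notMem_empty _)
  rcases hred with hC | hRet
  · -- cherry reduction
    obtain ⟨⟨hab, ⟨haV, hina, houta⟩, ⟨hbV, hinb, houtb⟩, _⟩, p, hpa, hpb, hcase⟩ := hC
    rcases hcase with ⟨hp0, hMV, hMA⟩ | ⟨g, hgp, hMV, hMA⟩
    · -- p is the root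
      intro v hv hvout
      rw [hMV, Finset.mem_sdiff] at hv
      obtain ⟨hvV, hvne⟩ := hv
      simp only [Finset.mem_insert, Finset.mem_singleton, not_or] at hvne
      obtain ⟨hva, hvp⟩ := hvne
      have hvoutR : R.outDeg v ≠ 0 := by
        obtain ⟨e, he⟩ := Finset.card_ne_zero.mp hvout
        obtain ⟨he1, he2⟩ := Finset.mem_filter.mp he
        rw [hMA] at he1
        exact Finset.card_ne_zero_of_mem
          (Finset.mem_filter.mpr ⟨(Finset.mem_sdiff.mp he1).1, he2⟩)
      obtain ⟨c, hvc, hcgood⟩ := htc v hvV hvoutR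
      have hca : c ≠ a := by rintro rfl; exact hvp (in_unique hina hvc hpa)
      have hcb : c ≠ b := by rintro rfl; exact hvp (in_unique hinb hvc hpb)
      have hinc1 : R.inDeg c = 1 := by rcases hcgood with h | h <;> exact h.2.1
      have hcV : c ∈ R.verts := by rcases hcgood with h | h <;> exact h.1
      have hcp : c ≠ p := by rintro rfl; omega
      have hvcM : (v, c) ∈ M.arcs := by
        rw [hMA]
        refine Finset.mem_sdiff.mpr ⟨hvc, ?_⟩
        intro hS
        simp only [Finset.mem_insert, Finset.mem_singleton] at hS
        rcases hS with h | h <;> exact hvp (congrArg Prod.fst h)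
      have hinM : M.arcs.filter (fun z => z.2 = c) = R.arcs.filter (fun z => z.2 = c) := by
        refine filter_congr_mem ?_
        rintro ⟨u, t⟩ ht
        have ht' : c = t := Eq.symm ht
        subst ht'
        rw [hMA]
        constructor
        · intro hm; exact (Finset.mem_sdiff.mp hm).1
        · intro hm
          refine Finset.mem_sdiff.mpr ⟨hm, ?_⟩
          intro hS
          simp only [Finset.mem_insert, Finset.mem_singleton] at hS
          rcases hS with h | h
          · exact hca (congrArg Prod.snd h)
          · exact hcb (congrArg Prod.snd h)
      have houtM : M.arcs.filter (fun z => z.1 = c) = R.arcs.filter (fun z => z.1 = c) := by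
        refine filter_congr_mem ?_
        rintro ⟨u, t⟩ hu
        have hu' : c = u := Eq.symm hu
        subst hu'
        rw [hMA]
        constructor
        · intro hm; exact (Finset.mem_sdiff.mp hm).1
        · intro hm
          refine Finset.mem_sdiff.mpr ⟨hm, ?_⟩
          intro hS
          simp only [Finset.mem_insert, Finset.mem_singleton] at hS
          rcases hS with h | h <;> exact hcp (congrArg Prod.fst h)
      have hinM' : M.inDeg c = R.inDeg c := by unfold DNet.inDeg; rw [hinM]
      have houtM' : M.outDeg c = R.outDeg c := by unfold DNet.outDeg; rw [houtM]
      have hcM : c ∈ M.verts := by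
        rw [hMV, Finset.mem_sdiff]
        refine ⟨hcV, ?_⟩
        simp only [Finset.mem_insert, Finset.mem_singleton, not_or]
        exact ⟨hca, hcp⟩
      refine ⟨c, hvcM, ?_⟩
      rcases hcgood with ⟨_, h1, h2⟩ | ⟨_, h1, h2⟩
      · exact Or.inl ⟨hcM, hinM'.trans h1, houtM'.trans h2⟩
      · exact Or.inr ⟨hcM, hinM'.trans h1, houtM'.trans h2⟩
    · -- p has a parent g
      have hpV : p ∈ R.verts := (hend _ hpa).1
      have hgpne : g ≠ p := hnl _ hgp
      have hout2 : 2 ≤ R.outDeg p := out_two hab hpa hpb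
      have hptree : R.inDeg p = 1 ∧ R.outDeg p = 2 := by
        rcases hclass p hpV with ⟨_, h1, h2⟩ | ⟨_, h1, h2⟩ | ⟨_, h1, h2⟩ | ⟨_, h1, h2⟩
        · exact absurd h1 (in_ne_zero hgp)
        · omega
        · exact ⟨h1, h2⟩
        · omega
      obtain ⟨hinp, houtp⟩ := hptree
      have hga : g ≠ a := by rintro rfl; exact out_ne_zero hgp houta
      have hgb : g ≠ b := by rintro rfl; exact out_ne_zero hgp houtb
      have hpa' : p ≠ a := by rintro rfl; omega
      have hpb' : p ≠ b := by rintro rfl; omega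
      have hgbarc : (g, b) ∉ R.arcs := fun h => hgpne (in_unique hinb h hpb)
      have hdeg : ∀ w, w ≠ a → w ≠ p →
          M.inDeg w = R.inDeg w ∧ M.outDeg w = R.outDeg w := by
        intro w hwa hwp
        constructor
        · by_cases hwb : w = b
          · rw [hwb]
            have hfil : M.arcs.filter (fun z => z.2 = b) = {(g, b)} := by
              apply Finset.eq_singleton_iff_unique_mem.mpr
              refine ⟨Finset.mem_filter.mpr
                ⟨by rw [hMA]; exact Finset.mem_insert_self _ _, rfl⟩, ?_⟩
              rintro ⟨u, t⟩ hm
              obtain ⟨hm, ht⟩ := Finset.mem_filter.mp hm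
              have ht' : t = b := ht
              rw [ht'] at hm ⊢
              rw [hMA] at hm
              rcases Finset.mem_insert.mp hm with h | hm
              · exact h
              · exfalso
                obtain ⟨hm2, hS⟩ := Finset.mem_sdiff.mp hm
                have hu : u = p := in_unique hinb hm2 hpb
                rw [hu] at hS
                exact hS (by simp)
            unfold DNet.inDeg
            rw [hfil, Finset.card_singleton]
            exact hinb.symm
          · have hfil : M.arcs.filter (fun z => z.2 = w) = R.arcs.filter (fun z => z.2 = w) := by
              refine filter_congr_mem ?_
              rintro ⟨u, t⟩ ht
              have ht' : w = t := Eq.symm ht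
              subst ht'
              rw [hMA]
              constructor
              · intro hm
                rcases Finset.mem_insert.mp hm with h | hm
                · exact absurd (congrArg Prod.snd h) hwb
                · exact (Finset.mem_sdiff.mp hm).1
              · intro hm
                refine Finset.mem_insert.mpr (Or.inr (Finset.mem_sdiff.mpr ⟨hm, ?_⟩))
                intro hS
                simp only [Finset.mem_insert, Finset.mem_singleton] at hS
                rcases hS with h | h | h
                · exact hwp (congrArg Prod.snd h)
                · exact hwa (congrArg Prod.snd h)
                · exact hwb (congrArg Prod.snd h)
            unfold DNet.inDeg
            rw [hfil]
        · by_cases hwg : w = g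
          · rw [hwg]
            have hfil : M.arcs.filter (fun z => z.1 = g) =
                insert (g, b) ((R.arcs.filter (fun z => z.1 = g)) \ {(g, p)}) := by
              rw [hMA]
              ext ⟨u, t⟩
              constructor
              · intro hm
                obtain ⟨hm, hu⟩ := Finset.mem_filter.mp hm
                have hu' : g = u := Eq.symm hu
                subst hu'
                rcases Finset.mem_insert.mp hm with h | hm
                · exact Finset.mem_insert.mpr (Or.inl h)
                · obtain ⟨hm, hS⟩ := Finset.mem_sdiff.mp hm
                  refine Finset.mem_insert.mpr (Or.inr (Finset.mem_sdiff.mpr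
                    ⟨Finset.mem_filter.mpr ⟨hm, rfl⟩, ?_⟩))
                  intro hsing
                  have htp : t = p := congrArg Prod.snd (Finset.mem_singleton.mp hsing)
                  rw [htp] at hS
                  exact hS (by simp)
              · intro hm
                rcases Finset.mem_insert.mp hm with h | hm
                · rw [h]
                  exact Finset.mem_filter.mpr ⟨Finset.mem_insert_self _ _, rfl⟩
                · obtain ⟨hm2, hsing⟩ := Finset.mem_sdiff.mp hm
                  obtain ⟨hm3, hu⟩ := Finset.mem_filter.mp hm2
                  have hu' : g = u := Eq.symm hu
                  subst hu'
                  refine Finset.mem_filter.mpr ⟨Finset.mem_insert.mpr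
                    (Or.inr (Finset.mem_sdiff.mpr ⟨hm3, ?_⟩)), rfl⟩
                  intro hS
                  simp only [Finset.mem_insert, Finset.mem_singleton] at hS
                  rcases hS with h | h | h
                  · exact hsing (by rw [h]; exact Finset.mem_singleton_self _)
                  · exact hgpne (congrArg Prod.fst h)
                  · exact hgpne (congrArg Prod.fst h)
            have hmemf : (g, p) ∈ R.arcs.filter (fun z => z.1 = g) :=
              Finset.mem_filter.mpr ⟨hgp, rfl⟩
            have hpos := Finset.card_pos.mpr ⟨_, hmemf⟩
            have hnotm : (g, b) ∉ (R.arcs.filter (fun z => z.1 = g)) \ {(g, p)} := by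
              intro h
              exact hgbarc (Finset.mem_filter.mp (Finset.mem_sdiff.mp h).1).1
            unfold DNet.outDeg
            rw [hfil, Finset.card_insert_of_notMem hnotm,
              Finset.card_sdiff_of_subset (Finset.singleton_subset_iff.mpr hmemf),
              Finset.card_singleton]
            omega
          · have hfil : M.arcs.filter (fun z => z.1 = w) = R.arcs.filter (fun z => z.1 = w) := by
              refine filter_congr_mem ?_
              rintro ⟨u, t⟩ hu
              have hu' : w = u := Eq.symm hu
              subst hu'
              rw [hMA]
              constructor
              · intro hm
                rcases Finset.mem_insert.mp hm with h | hm
                · exact absurd (congrArg Prod.fst h) hwg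
                · exact (Finset.mem_sdiff.mp hm).1
              · intro hm
                refine Finset.mem_insert.mpr (Or.inr (Finset.mem_sdiff.mpr ⟨hm, ?_⟩))
                intro hS
                simp only [Finset.mem_insert, Finset.mem_singleton] at hS
                rcases hS with h | h | h
                · exact hwg (congrArg Prod.fst h)
                · exact hwp (congrArg Prod.fst h)
                · exact hwp (congrArg Prod.fst h)
            unfold DNet.outDeg
            rw [hfil]
      intro v hv hvout
      rw [hMV, Finset.mem_sdiff] at hv
      obtain ⟨hvV, hvne⟩ := hv
      simp only [Finset.mem_insert, Finset.mem_singleton, not_or] at hvne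
      obtain ⟨hva, hvp⟩ := hvne
      by_cases hvg : v = g
      · subst hvg
        refine ⟨b, by rw [hMA]; exact Finset.mem_insert_self _ _, Or.inr ?_⟩
        have hbM : b ∈ M.verts := by
          rw [hMV, Finset.mem_sdiff]
          refine ⟨hbV, ?_⟩
          simp only [Finset.mem_insert, Finset.mem_singleton, not_or]
          exact ⟨Ne.symm hab, Ne.symm hpb'⟩
        obtain ⟨hd1, hd2⟩ := hdeg b (Ne.symm hab) (Ne.symm hpb')
        exact ⟨hbM, hd1.trans hinb, hd2.trans houtb⟩
      · have hvoutR : R.outDeg v ≠ 0 := by rw [← (hdeg v hva hvp).2]; exact hvout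
        obtain ⟨c, hvc, hcgood⟩ := htc v hvV hvoutR
        have hca : c ≠ a := by rintro rfl; exact hvp (in_unique hina hvc hpa)
        have hcp : c ≠ p := by rintro rfl; exact hvg (in_unique hinp hvc hgp)
        have hcV : c ∈ R.verts := by rcases hcgood with h | h <;> exact h.1
        have hvcM : (v, c) ∈ M.arcs := by
          rw [hMA]
          refine Finset.mem_insert.mpr (Or.inr (Finset.mem_sdiff.mpr ⟨hvc, ?_⟩))
          intro hS
          simp only [Finset.mem_insert, Finset.mem_singleton] at hS
          rcases hS with h | h | h
          · exact hvg (congrArg Prod.fst h)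
          · exact hvp (congrArg Prod.fst h)
          · exact hvp (congrArg Prod.fst h)
        have hcM : c ∈ M.verts := by
          rw [hMV, Finset.mem_sdiff]
          refine ⟨hcV, ?_⟩
          simp only [Finset.mem_insert, Finset.mem_singleton, not_or]
          exact ⟨hca, hcp⟩
        obtain ⟨hd1, hd2⟩ := hdeg c hca hcp
        refine ⟨c, hvcM, ?_⟩
        rcases hcgood with ⟨_, h1, h2⟩ | ⟨_, h1, h2⟩
        · exact Or.inl ⟨hcM, hd1.trans h1, hd2.trans h2⟩
        · exact Or.inr ⟨hcM, hd1.trans h1, hd2.trans h2⟩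
  · -- reticulated cherry reduction
    obtain ⟨⟨hab, ⟨haV, hina, houta⟩, ⟨hbV, hinb, houtb⟩, _⟩, pa, pb, qa, qb, hpaa, hpbb,
      ⟨hpaV, hinpa, houtpa⟩, hpbpa, hqapa, hqanepb, hqbpb, hMV, hMA⟩ := hRet
    have hbpa : b ≠ pa := by rintro rfl; omega
    have hout2pb : 2 ≤ R.outDeg pb := out_two hbpa hpbb hpbpa
    have hpbV : pb ∈ R.verts := (hend _ hpbb).1
    have hinpb : R.inDeg pb = 1 := by
      rcases hclass pb hpbV with ⟨_, h1, h2⟩ | ⟨_, h1, h2⟩ | ⟨_, h1, h2⟩ | ⟨_, h1, h2⟩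
      · exact absurd h1 (in_ne_zero hqbpb)
      · omega
      · exact h1
      · omega
    have hpana : pa ≠ a := by rintro rfl; omega
    have hpanb : pa ≠ b := by rintro rfl; omega
    have hpbna : pb ≠ a := by rintro rfl; omega
    have hpbnb : pb ≠ b := by rintro rfl; omega
    have hpapb : pa ≠ pb := by rintro rfl; omega
    have hqana : qa ≠ a := by rintro rfl; exact out_ne_zero hqapa houta
    have hqanb : qa ≠ b := by rintro rfl; exact out_ne_zero hqapa houtb
    have hqbna : qb ≠ a := by rintro rfl; exact out_ne_zero hqbpb houta
    have hqbnb : qb ≠ b := by rintro rfl; exact out_ne_zero hqbpb houtb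
    have hqanpa : qa ≠ pa := hnl _ hqapa
    have hqbnpb : qb ≠ pb := hnl _ hqbpb
    have hqbnpa : qb ≠ pa := by rintro rfl; exact hpbna (out_unique houtpa hqbpb hpaa)
    have hqaa_arc : (qa, a) ∉ R.arcs := fun h => hqanpa (in_unique hina h hpaa)
    have hqbb_arc : (qb, b) ∉ R.arcs := fun h => hqbnpb (in_unique hinb h hpbb)
    have hdeg : ∀ w, w ≠ pa → w ≠ pb →
        M.inDeg w = R.inDeg w ∧ M.outDeg w = R.outDeg w := by
      intro w hwpa hwpb
      constructor
      · by_cases hwa2 : w = a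
        · rw [hwa2]
          have hfil : M.arcs.filter (fun z => z.2 = a) = {(qa, a)} := by
            apply Finset.eq_singleton_iff_unique_mem.mpr
            refine ⟨Finset.mem_filter.mpr
              ⟨by rw [hMA]; exact Finset.mem_insert_self _ _, rfl⟩, ?_⟩
            rintro ⟨u, t⟩ hm
            obtain ⟨hm, ht⟩ := Finset.mem_filter.mp hm
            have ht' : t = a := ht
            rw [ht'] at hm ⊢
            rw [hMA] at hm
            rcases Finset.mem_insert.mp hm with h | hm
            · exact h
            rcases Finset.mem_insert.mp hm with h | hm
            · exact absurd (congrArg Prod.snd h) hab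
            · exfalso
              obtain ⟨hm2, hS⟩ := Finset.mem_sdiff.mp hm
              have hu : u = pa := in_unique hina hm2 hpaa
              rw [hu] at hS
              exact hS (by simp)
          unfold DNet.inDeg
          rw [hfil, Finset.card_singleton]
          exact hina.symm
        by_cases hwb2 : w = b
        · rw [hwb2]
          have hfil : M.arcs.filter (fun z => z.2 = b) = {(qb, b)} := by
            apply Finset.eq_singleton_iff_unique_mem.mpr
            refine ⟨Finset.mem_filter.mpr
              ⟨by rw [hMA]; exact Finset.mem_insert_of_mem (Finset.mem_insert_self _ _),
                rfl⟩, ?_⟩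
            rintro ⟨u, t⟩ hm
            obtain ⟨hm, ht⟩ := Finset.mem_filter.mp hm
            have ht' : t = b := ht
            rw [ht'] at hm ⊢
            rw [hMA] at hm
            rcases Finset.mem_insert.mp hm with h | hm
            · exact absurd (congrArg Prod.snd h).symm hab
            rcases Finset.mem_insert.mp hm with h | hm
            · exact h
            · exfalso
              obtain ⟨hm2, hS⟩ := Finset.mem_sdiff.mp hm
              have hu : u = pb := in_unique hinb hm2 hpbb
              rw [hu] at hS
              exact hS (by simp)
          unfold DNet.inDeg
          rw [hfil, Finset.card_singleton]
          exact hinb.symm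
        · have hfil : M.arcs.filter (fun z => z.2 = w) = R.arcs.filter (fun z => z.2 = w) := by
            refine filter_congr_mem ?_
            rintro ⟨u, t⟩ ht
            have ht' : t = w := ht
            rw [ht']
            rw [hMA]
            constructor
            · intro hm
              rcases Finset.mem_insert.mp hm with h | hm
              · exact absurd (congrArg Prod.snd h) hwa2
              rcases Finset.mem_insert.mp hm with h | hm
              · exact absurd (congrArg Prod.snd h) hwb2
              · exact (Finset.mem_sdiff.mp hm).1
            · intro hm
              refine Finset.mem_insert.mpr (Or.inr (Finset.mem_insert.mpr
                (Or.inr (Finset.mem_sdiff.mpr ⟨hm, ?_⟩))))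
              intro hS
              simp only [Finset.mem_insert, Finset.mem_singleton] at hS
              rcases hS with h | h | h | h | h
              · exact hwpa (congrArg Prod.snd h)
              · exact hwa2 (congrArg Prod.snd h)
              · exact hwpa (congrArg Prod.snd h)
              · exact hwb2 (congrArg Prod.snd h)
              · exact hwpb (congrArg Prod.snd h)
          unfold DNet.inDeg
          rw [hfil]
      · by_cases hwqa : w = qa
        · rw [hwqa]
          by_cases hqab : qb = qa
          · -- qa = qb
            have hqbpb' : (qa, pb) ∈ R.arcs := by rw [← hqab]; exact hqbpb
            have hqab_arc : (qa, b) ∉ R.arcs := by rw [← hqab]; exact hqbb_arc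
            have hfil : M.arcs.filter (fun z => z.1 = qa) =
                insert (qa, a) (insert (qa, b)
                  ((R.arcs.filter (fun z => z.1 = qa)) \ {(qa, pa), (qa, pb)})) := by
              rw [hMA]
              ext ⟨u, t⟩
              constructor
              · intro hm
                obtain ⟨hm, hu⟩ := Finset.mem_filter.mp hm
                have hu' : u = qa := hu
                rw [hu'] at hm ⊢
                rcases Finset.mem_insert.mp hm with h | hm
                · exact Finset.mem_insert.mpr (Or.inl h)
                rcases Finset.mem_insert.mp hm with h | hm
                · rw [hqab] at h
                  exact Finset.mem_insert.mpr (Or.inr (Finset.mem_insert.mpr (Or.inl h)))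
                · obtain ⟨hm2, hS⟩ := Finset.mem_sdiff.mp hm
                  refine Finset.mem_insert.mpr (Or.inr (Finset.mem_insert.mpr (Or.inr
                    (Finset.mem_sdiff.mpr ⟨Finset.mem_filter.mpr ⟨hm2, rfl⟩, ?_⟩))))
                  intro hset
                  simp only [Finset.mem_insert, Finset.mem_singleton] at hset
                  rcases hset with h | h
                  · have htp : t = pa := congrArg Prod.snd h
                    rw [htp] at hS
                    exact hS (by simp)
                  · have htp : t = pb := congrArg Prod.snd h
                    rw [htp] at hS
                    exact hS (by simp [hqab])
              · intro hm
                rcases Finset.mem_insert.mp hm with h | hm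
                · rw [h]
                  exact Finset.mem_filter.mpr ⟨Finset.mem_insert_self _ _, rfl⟩
                rcases Finset.mem_insert.mp hm with h | hm
                · rw [h]
                  refine Finset.mem_filter.mpr ⟨Finset.mem_insert.mpr (Or.inr
                    (Finset.mem_insert.mpr (Or.inl (by rw [hqab])))), rfl⟩
                · obtain ⟨hm2, hset⟩ := Finset.mem_sdiff.mp hm
                  obtain ⟨hm3, hu⟩ := Finset.mem_filter.mp hm2
                  have hu' : u = qa := hu
                  rw [hu'] at hm3 hset ⊢
                  refine Finset.mem_filter.mpr ⟨Finset.mem_insert.mpr (Or.inr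
                    (Finset.mem_insert.mpr (Or.inr (Finset.mem_sdiff.mpr ⟨hm3, ?_⟩)))), rfl⟩
                  intro hS
                  simp only [Finset.mem_insert, Finset.mem_singleton] at hS
                  rcases hS with h | h | h | h | h
                  · exact hqanepb (congrArg Prod.fst h)
                  · exact hqanpa (congrArg Prod.fst h)
                  · exact hset (by rw [h]; exact Finset.mem_insert_self _ _)
                  · exact hqanepb (congrArg Prod.fst h)
                  · rw [hqab] at h
                    exact hset (by rw [h]; simp)
            have hmf1 : (qa, pa) ∈ R.arcs.filter (fun z => z.1 = qa) :=
              Finset.mem_filter.mpr ⟨hqapa, rfl⟩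
            have hmf2 : (qa, pb) ∈ R.arcs.filter (fun z => z.1 = qa) :=
              Finset.mem_filter.mpr ⟨hqbpb', rfl⟩
            have hsub : ({(qa, pa), (qa, pb)} : Finset (ℕ × ℕ)) ⊆
                R.arcs.filter (fun z => z.1 = qa) :=
              Finset.insert_subset_iff.mpr ⟨hmf1, Finset.singleton_subset_iff.mpr hmf2⟩
            have hge2 : 2 ≤ (R.arcs.filter (fun z => z.1 = qa)).card :=
              Finset.one_lt_card.mpr ⟨_, hmf1, _, hmf2, by simp [hpapb]⟩
            have hcT : ({(qa, pa), (qa, pb)} : Finset (ℕ × ℕ)).card = 2 := by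
              rw [Finset.card_insert_of_notMem (by simp [hpapb]), Finset.card_singleton]
            have hnot1 : (qa, b) ∉ (R.arcs.filter (fun z => z.1 = qa)) \ {(qa, pa), (qa, pb)} := by
              intro h
              exact hqab_arc (Finset.mem_filter.mp (Finset.mem_sdiff.mp h).1).1
            have hnot2 : (qa, a) ∉ insert (qa, b)
                ((R.arcs.filter (fun z => z.1 = qa)) \ {(qa, pa), (qa, pb)}) := by
              intro h
              rcases Finset.mem_insert.mp h with h | h
              · exact hab (congrArg Prod.snd h)
              · exact hqaa_arc (Finset.mem_filter.mp (Finset.mem_sdiff.mp h).1).1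
            unfold DNet.outDeg
            rw [hfil, Finset.card_insert_of_notMem hnot2, Finset.card_insert_of_notMem hnot1,
              Finset.card_sdiff_of_subset hsub, hcT]
            omega
          · -- w = qa, qb ≠ qa
            have hfil : M.arcs.filter (fun z => z.1 = qa) =
                insert (qa, a) ((R.arcs.filter (fun z => z.1 = qa)) \ {(qa, pa)}) := by
              rw [hMA]
              ext ⟨u, t⟩
              constructor
              · intro hm
                obtain ⟨hm, hu⟩ := Finset.mem_filter.mp hm
                have hu' : u = qa := hu
                rw [hu'] at hm ⊢
                rcases Finset.mem_insert.mp hm with h | hm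
                · exact Finset.mem_insert.mpr (Or.inl h)
                rcases Finset.mem_insert.mp hm with h | hm
                · exact absurd (congrArg Prod.fst h).symm hqab
                · obtain ⟨hm2, hS⟩ := Finset.mem_sdiff.mp hm
                  refine Finset.mem_insert.mpr (Or.inr
                    (Finset.mem_sdiff.mpr ⟨Finset.mem_filter.mpr ⟨hm2, rfl⟩, ?_⟩))
                  intro hsing
                  have htp : t = pa := congrArg Prod.snd (Finset.mem_singleton.mp hsing)
                  rw [htp] at hS
                  exact hS (by simp)
              · intro hm
                rcases Finset.mem_insert.mp hm with h | hm
                · rw [h]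
                  exact Finset.mem_filter.mpr ⟨Finset.mem_insert_self _ _, rfl⟩
                · obtain ⟨hm2, hsing⟩ := Finset.mem_sdiff.mp hm
                  obtain ⟨hm3, hu⟩ := Finset.mem_filter.mp hm2
                  have hu' : u = qa := hu
                  rw [hu'] at hm3 hsing ⊢
                  refine Finset.mem_filter.mpr ⟨Finset.mem_insert.mpr (Or.inr
                    (Finset.mem_insert.mpr (Or.inr (Finset.mem_sdiff.mpr ⟨hm3, ?_⟩)))), rfl⟩
                  intro hS
                  simp only [Finset.mem_insert, Finset.mem_singleton] at hS
                  rcases hS with h | h | h | h | h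
                  · exact hqanepb (congrArg Prod.fst h)
                  · exact hqanpa (congrArg Prod.fst h)
                  · exact hsing (by rw [h]; exact Finset.mem_singleton_self _)
                  · exact hqanepb (congrArg Prod.fst h)
                  · exact hqab (congrArg Prod.fst h).symm
            have hmemf : (qa, pa) ∈ R.arcs.filter (fun z => z.1 = qa) :=
              Finset.mem_filter.mpr ⟨hqapa, rfl⟩
            have hpos := Finset.card_pos.mpr ⟨_, hmemf⟩
            have hnotm : (qa, a) ∉ (R.arcs.filter (fun z => z.1 = qa)) \ {(qa, pa)} := by
              intro h
              exact hqaa_arc (Finset.mem_filter.mp (Finset.mem_sdiff.mp h).1).1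
            unfold DNet.outDeg
            rw [hfil, Finset.card_insert_of_notMem hnotm,
              Finset.card_sdiff_of_subset (Finset.singleton_subset_iff.mpr hmemf),
              Finset.card_singleton]
            omega
        by_cases hwqb : w = qb
        · -- w = qb ≠ qa
          rw [hwqb]
          have hqab : qa ≠ qb := by rintro rfl; exact hwqa hwqb
          have hfil : M.arcs.filter (fun z => z.1 = qb) =
              insert (qb, b) ((R.arcs.filter (fun z => z.1 = qb)) \ {(qb, pb)}) := by
            rw [hMA]
            ext ⟨u, t⟩
            constructor
            · intro hm
              obtain ⟨hm, hu⟩ := Finset.mem_filter.mp hm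
              have hu' : u = qb := hu
              rw [hu'] at hm ⊢
              rcases Finset.mem_insert.mp hm with h | hm
              · exact absurd (congrArg Prod.fst h).symm hqab
              rcases Finset.mem_insert.mp hm with h | hm
              · exact Finset.mem_insert.mpr (Or.inl h)
              · obtain ⟨hm2, hS⟩ := Finset.mem_sdiff.mp hm
                refine Finset.mem_insert.mpr (Or.inr
                  (Finset.mem_sdiff.mpr ⟨Finset.mem_filter.mpr ⟨hm2, rfl⟩, ?_⟩))
                intro hsing
                have htp : t = pb := congrArg Prod.snd (Finset.mem_singleton.mp hsing)
                rw [htp] at hS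
                exact hS (by simp)
            · intro hm
              rcases Finset.mem_insert.mp hm with h | hm
              · rw [h]
                exact Finset.mem_filter.mpr ⟨Finset.mem_insert.mpr
                  (Or.inr (Finset.mem_insert_self _ _)), rfl⟩
              · obtain ⟨hm2, hsing⟩ := Finset.mem_sdiff.mp hm
                obtain ⟨hm3, hu⟩ := Finset.mem_filter.mp hm2
                have hu' : u = qb := hu
                rw [hu'] at hm3 hsing ⊢
                refine Finset.mem_filter.mpr ⟨Finset.mem_insert.mpr (Or.inr
                  (Finset.mem_insert.mpr (Or.inr (Finset.mem_sdiff.mpr ⟨hm3, ?_⟩)))), rfl⟩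
                intro hS
                simp only [Finset.mem_insert, Finset.mem_singleton] at hS
                rcases hS with h | h | h | h | h
                · exact hqbnpb (congrArg Prod.fst h)
                · exact hqbnpa (congrArg Prod.fst h)
                · exact hqab (congrArg Prod.fst h).symm
                · exact hqbnpb (congrArg Prod.fst h)
                · exact hsing (by rw [h]; exact Finset.mem_singleton_self _)
          have hmemf : (qb, pb) ∈ R.arcs.filter (fun z => z.1 = qb) :=
            Finset.mem_filter.mpr ⟨hqbpb, rfl⟩
          have hpos := Finset.card_pos.mpr ⟨_, hmemf⟩
          have hnotm : (qb, b) ∉ (R.arcs.filter (fun z => z.1 = qb)) \ {(qb, pb)} := by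
            intro h
            exact hqbb_arc (Finset.mem_filter.mp (Finset.mem_sdiff.mp h).1).1
          unfold DNet.outDeg
          rw [hfil, Finset.card_insert_of_notMem hnotm,
            Finset.card_sdiff_of_subset (Finset.singleton_subset_iff.mpr hmemf),
            Finset.card_singleton]
          omega
        · -- generic w
          have hfil : M.arcs.filter (fun z => z.1 = w) = R.arcs.filter (fun z => z.1 = w) := by
            refine filter_congr_mem ?_
            rintro ⟨u, t⟩ hu
            have hu' : u = w := hu
            rw [hu']
            rw [hMA]
            constructor
            · intro hm
              rcases Finset.mem_insert.mp hm with h | hm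
              · exact absurd (congrArg Prod.fst h) hwqa
              rcases Finset.mem_insert.mp hm with h | hm
              · exact absurd (congrArg Prod.fst h) hwqb
              · exact (Finset.mem_sdiff.mp hm).1
            · intro hm
              refine Finset.mem_insert.mpr (Or.inr (Finset.mem_insert.mpr
                (Or.inr (Finset.mem_sdiff.mpr ⟨hm, ?_⟩))))
              intro hS
              simp only [Finset.mem_insert, Finset.mem_singleton] at hS
              rcases hS with h | h | h | h | h
              · exact hwpb (congrArg Prod.fst h)
              · exact hwpa (congrArg Prod.fst h)
              · exact hwqa (congrArg Prod.fst h)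
              · exact hwpb (congrArg Prod.fst h)
              · exact hwqb (congrArg Prod.fst h)
          unfold DNet.outDeg
          rw [hfil]
    intro v hv hvout
    rw [hMV, Finset.mem_sdiff] at hv
    obtain ⟨hvV, hvne⟩ := hv
    simp only [Finset.mem_insert, Finset.mem_singleton, not_or] at hvne
    obtain ⟨hvpa, hvpb⟩ := hvne
    have haM : a ∈ M.verts := by
      rw [hMV, Finset.mem_sdiff]
      refine ⟨haV, ?_⟩
      simp only [Finset.mem_insert, Finset.mem_singleton, not_or]
      exact ⟨Ne.symm hpana, Ne.symm hpbna⟩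
    have hbM : b ∈ M.verts := by
      rw [hMV, Finset.mem_sdiff]
      refine ⟨hbV, ?_⟩
      simp only [Finset.mem_insert, Finset.mem_singleton, not_or]
      exact ⟨Ne.symm hpanb, Ne.symm hpbnb⟩
    by_cases hvqa : v = qa
    · refine ⟨a, by rw [hMA, hvqa]; exact Finset.mem_insert_self _ _, Or.inr ?_⟩
      obtain ⟨hd1, hd2⟩ := hdeg a (Ne.symm hpana) (Ne.symm hpbna)
      exact ⟨haM, hd1.trans hina, hd2.trans houta⟩
    by_cases hvqb : v = qb
    · refine ⟨b, by rw [hMA, hvqb]; exact Finset.mem_insert_of_mem (Finset.mem_insert_self _ _),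
        Or.inr ?_⟩
      obtain ⟨hd1, hd2⟩ := hdeg b (Ne.symm hpanb) (Ne.symm hpbnb)
      exact ⟨hbM, hd1.trans hinb, hd2.trans houtb⟩
    · have hvoutR : R.outDeg v ≠ 0 := by rw [← (hdeg v hvpa hvpb).2]; exact hvout
      obtain ⟨c, hvc, hcgood⟩ := htc v hvV hvoutR
      have hcpa : c ≠ pa := by
        rintro rfl
        rcases in_mem_pair hinpa (Ne.symm hqanepb) hpbpa hqapa hvc with h | h
        · exact hvpb h
        · exact hvqa h
      have hcpb : c ≠ pb := by rintro rfl; exact hvqb (in_unique hinpb hvc hqbpb)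
      have hcV : c ∈ R.verts := by rcases hcgood with h | h <;> exact h.1
      have hvcM : (v, c) ∈ M.arcs := by
        rw [hMA]
        refine Finset.mem_insert.mpr (Or.inr (Finset.mem_insert.mpr
          (Or.inr (Finset.mem_sdiff.mpr ⟨hvc, ?_⟩))))
        intro hS
        simp only [Finset.mem_insert, Finset.mem_singleton] at hS
        rcases hS with h | h | h | h | h
        · exact hvpb (congrArg Prod.fst h)
        · exact hvpa (congrArg Prod.fst h)
        · exact hvqa (congrArg Prod.fst h)
        · exact hvpb (congrArg Prod.fst h)
        · exact hvqb (congrArg Prod.fst h)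
      have hcM : c ∈ M.verts := by
        rw [hMV, Finset.mem_sdiff]
        refine ⟨hcV, ?_⟩
        simp only [Finset.mem_insert, Finset.mem_singleton, not_or]
        exact ⟨hcpa, hcpb⟩
      obtain ⟨hd1, hd2⟩ := hdeg c hcpa hcpb
      refine ⟨c, hvcM, ?_⟩
      rcases hcgood with ⟨_, h1, h2⟩ | ⟨_, h1, h2⟩
      · exact Or.inl ⟨hcM, hd1.trans h1, hd2.trans h2⟩
      · exact Or.inr ⟨hcM, hd1.trans h1, hd2.trans h2⟩
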